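/- (Negative-case greedy optimality.) Fix a threshold t₋ and assume s(x) ≤ t₋. Define α_j^max := max (w j * l j) (w j * u j) and δ_j⁻ := α_j^max − w j * x j, and assume the features are indexed so that δ⁻ is nonincreasing (for i ≤ j, δ_i⁻ ≥ δ_j⁻). Let k ≤ n be the least index such that b + (∑ j, α_j^max) − ∑_{i < k} δ_i⁻ ≤ t₋ (such k exists since taking all features gives sMax(univ) = s(x) ≤ t₋). Then the prefix E_g := {i : i < k} satisfies s(x') ≤ t₋ for every completion x' of E_g, and every subset E ⊆ Fin n such that all completions x' of E satisfy s(x') ≤ t₋ has |E| ≥ k. That is, E_g is a minimum-size abductive explanation for the negative prediction. -/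

import Mathlib

open Finset

lemma strictMono_le_apply' {m n : ℕ} {f : Fin m → Fin n} (hf : StrictMono f) :
    ∀ i : Fin m, (i : ℕ) ≤ f i := by
  have key : ∀ v, ∀ h : v < m, v ≤ (f ⟨v, h⟩ : ℕ) := by
    intro v
    induction v with
    | zero => intro h; exact Nat.zero_le _
    | succ v ih =>
      intro h
      have hv : v < m := by omega
      have h1 := ih hv
      have h2 : f ⟨v, hv⟩ < f ⟨v + 1, h⟩ := hf (by simp [Fin.lt_def])
      rw [Fin.lt_def] at h2
      omega
  intro i
  have := key i.val i.isLt
  simpa using this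

lemma wx_le_alpha (w l u xv : ℝ) (h1 : l ≤ xv) (h2 : xv ≤ u) :
    w * xv ≤ max (w * l) (w * u) := by
  rcases le_total 0 w with hw | hw
  · exact le_max_of_le_right (mul_le_mul_of_nonneg_left h2 hw)
  · exact le_max_of_le_left (mul_le_mul_of_nonpos_left h1 hw)

theorem greedy_negative_optimal
    (n : ℕ) (w : Fin n → ℝ) (b : ℝ) (l u : Fin n → ℝ)
    (hlu : ∀ j, l j ≤ u j)
    (x : Fin n → ℝ) (hx : ∀ j, l j ≤ x j ∧ x j ≤ u j)
    (tMinus : ℝ) (hsx : (∑ j, w j * x j) + b ≤ tMinus)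
    (hmono : ∀ i j : Fin n, i ≤ j →
      max (w j * l j) (w j * u j) - w j * x j ≤ max (w i * l i) (w i * u i) - w i * x i)
    (k : ℕ) (hk : k ≤ n)
    (hge : b + (∑ j, max (w j * l j) (w j * u j)) -
      (∑ i ∈ filter (fun i : Fin n => (i : ℕ) < k) univ,
        (max (w i * l i) (w i * u i) - w i * x i)) ≤ tMinus)
    (hleast : ∀ m : ℕ, m < k →
      ¬ (b + (∑ j, max (w j * l j) (w j * u j)) -
        (∑ i ∈ filter (fun i : Fin n => (i : ℕ) < m) univ,
          (max (w i * l i) (w i * u i) - w i * x i)) ≤ tMinus)) :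
    (∀ x' : Fin n → ℝ, (∀ j, l j ≤ x' j ∧ x' j ≤ u j) →
        (∀ j ∈ filter (fun i : Fin n => (i : ℕ) < k) univ, x' j = x j) →
        (∑ j, w j * x' j) + b ≤ tMinus) ∧
    (∀ E : Finset (Fin n),
      (∀ x' : Fin n → ℝ, (∀ j, l j ≤ x' j ∧ x' j ≤ u j) → (∀ j ∈ E, x' j = x j) →
        (∑ j, w j * x' j) + b ≤ tMinus) →
      k ≤ E.card) := by
  set α : Fin n → ℝ := fun j => max (w j * l j) (w j * u j) with hα
  set δ : Fin n → ℝ := fun j => α j - w j * x j with hδ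
  -- generic score decomposition: for any finset E and completion-style x'
  have score_le : ∀ (E : Finset (Fin n)) (x' : Fin n → ℝ),
      (∀ j, l j ≤ x' j ∧ x' j ≤ u j) → (∀ j ∈ E, x' j = x j) →
      (∑ j, w j * x' j) + b ≤ b + (∑ j, α j) - ∑ i ∈ E, δ i := by
    intro E x' hb he
    have hs1 : ∑ j, w j * x' j = (∑ j ∈ E, w j * x' j) + ∑ j ∈ Eᶜ, w j * x' j :=
      (Finset.sum_add_sum_compl E _).symm
    have hs2 : ∑ j, α j = (∑ j ∈ E, α j) + ∑ j ∈ Eᶜ, α j :=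
      (Finset.sum_add_sum_compl E _).symm
    have hE1 : ∑ j ∈ E, w j * x' j = ∑ j ∈ E, w j * x j :=
      Finset.sum_congr rfl fun j hj => by rw [he j hj]
    have hE2 : ∑ j ∈ Eᶜ, w j * x' j ≤ ∑ j ∈ Eᶜ, α j :=
      Finset.sum_le_sum fun j _ => wx_le_alpha _ _ _ _ (hb j).1 (hb j).2
    have hδs : ∑ i ∈ E, δ i = (∑ i ∈ E, α i) - ∑ i ∈ E, w i * x i := by
      rw [hδ]; exact Finset.sum_sub_distrib (fun i => α i) (fun i => w i * x i)
    rw [hs1, hE1]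
    rw [hs2, hδs]
    linarith
  -- exact score of the maximizing completion
  have score_eq : ∀ (E : Finset (Fin n)),
      ∃ x' : Fin n → ℝ, (∀ j, l j ≤ x' j ∧ x' j ≤ u j) ∧ (∀ j ∈ E, x' j = x j) ∧
      (∑ j, w j * x' j) + b = b + (∑ j, α j) - ∑ i ∈ E, δ i := by
    intro E
    refine ⟨fun j => if j ∈ E then x j else (if 0 ≤ w j then u j else l j), ?_, ?_, ?_⟩
    · intro j
      dsimp only
      split_ifs with h1 h2
      · exact hx j
      · exact ⟨hlu j, le_refl _⟩
      · exact ⟨le_refl _, hlu j⟩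
    · intro j hj; simp [hj]
    · have h1 : ∑ j, w j * (if j ∈ E then x j else (if 0 ≤ w j then u j else l j))
          = (∑ j ∈ E, w j * x j) + ∑ j ∈ Eᶜ, α j := by
        rw [← Finset.sum_add_sum_compl E]
        congr 1
        · exact Finset.sum_congr rfl fun j hj => by simp [hj]
        · refine Finset.sum_congr rfl fun j hj => ?_
          rw [Finset.mem_compl] at hj
          simp only [hj, if_false, hα]
          rcases le_or_gt 0 (w j) with hw | hw
          · rw [if_pos hw, max_eq_right (mul_le_mul_of_nonneg_left (hlu j) hw)]
          · rw [if_neg (not_le.mpr hw),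
              max_eq_left (mul_le_mul_of_nonpos_left (hlu j) hw.le)]
      rw [h1]
      have hs2 : ∑ j, α j = (∑ j ∈ E, α j) + ∑ j ∈ Eᶜ, α j :=
        (Finset.sum_add_sum_compl E _).symm
      have hδs : ∑ i ∈ E, δ i = (∑ i ∈ E, α i) - ∑ i ∈ E, w i * x i := by
        rw [hδ]; exact Finset.sum_sub_distrib (fun i => α i) (fun i => w i * x i)
      rw [hs2, hδs]; ring
  constructor
  · intro x' hb he
    exact le_trans (score_le _ x' hb he) hge
  · intro E hE
    by_contra hlt
    push_neg at hlt
    set m := E.card with hm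
    have hmn : m ≤ n := le_trans hlt.le hk
    -- sum over E in terms of the order embedding
    have hcard : E.card = m := rfl
    set e := E.orderEmbOfFin hcard with he
    have himg : Finset.image (fun i => e i) univ = E := by
      ext a
      simp only [Finset.mem_image, Finset.mem_univ, true_and]
      constructor
      · rintro ⟨i, rfl⟩; exact E.orderEmbOfFin_mem hcard i
      · intro ha
        have : a ∈ Set.range (e : Fin m → Fin n) := by
          rw [he, E.range_orderEmbOfFin hcard]; exact ha
        obtain ⟨i, hi⟩ := this
        exact ⟨i, hi⟩
    have hsumE : ∑ i ∈ E, δ i = ∑ i : Fin m, δ (e i) := by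
      rw [← himg, Finset.sum_image (fun a _ b _ h => e.injective h)]
    -- prefix sum as image of castLE
    have himg2 : Finset.image (fun i : Fin m => Fin.castLE hmn i) univ
        = filter (fun i : Fin n => (i : ℕ) < m) univ := by
      ext a
      simp only [Finset.mem_image, Finset.mem_univ, true_and, Finset.mem_filter]
      constructor
      · rintro ⟨i, rfl⟩; exact i.isLt
      · intro ha; exact ⟨⟨a.val, ha⟩, rfl⟩
    have hsumP : ∑ i ∈ filter (fun i : Fin n => (i : ℕ) < m) univ, δ i
        = ∑ i : Fin m, δ (Fin.castLE hmn i) := by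
      rw [← himg2, Finset.sum_image (fun a _ b _ h => by
        simpa [Fin.ext_iff] using congrArg Fin.val h)]
    -- compare
    have hcomp : ∑ i ∈ E, δ i ≤ ∑ i ∈ filter (fun i : Fin n => (i : ℕ) < m) univ, δ i := by
      rw [hsumE, hsumP]
      refine Finset.sum_le_sum fun i _ => ?_
      have hle : Fin.castLE hmn i ≤ e i := by
        rw [Fin.le_def]
        simpa using strictMono_le_apply' e.strictMono i
      exact hmono _ _ hle
    obtain ⟨x', hb', he', heq⟩ := score_eq E
    have h1 := hE x' hb' he'
    rw [heq] at h1
    have h2 := hleast m hlt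
    rw [hα, hδ] at *
    apply h2
    calc b + (∑ j, max (w j * l j) (w j * u j)) -
        (∑ i ∈ filter (fun i : Fin n => (i : ℕ) < m) univ,
          (max (w i * l i) (w i * u i) - w i * x i))
        ≤ b + (∑ j, max (w j * l j) (w j * u j)) -
          ∑ i ∈ E, (max (w i * l i) (w i * u i) - w i * x i) := by linarith [hcomp]
      _ ≤ tMinus := h1
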